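/- Preservation for λ_op: if E[c] is closed and well-typed with computation type T ! Δ and ⟨c; E⟩ → ⟨c'; E'⟩, then E'[c'] is closed and well-typed with computation type T ! Δ. -/

import Mathlib

/- A formalisation of λ_op: a fine-grained call-by-value calculus with deep
effect handlers and multi-shot continuations, in de Bruijn style. -/

namespace EffLang

abbrev OpName := String
abbrev Eff := Set OpName

/-- Value types of λ_op. -/
inductive VTy : Type
  | nat  : VTy
  | fn   : VTy → Eff → VTy → VTy    -- S →Δ T
  | cont : VTy → Eff → VTy → VTy    -- S ⇒Δ T

/-- An effect signature Σ, assigning argument and result types to operations. -/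
structure Sig where
  arg : OpName → VTy
  res : OpName → VTy

mutual
  /-- Values. -/
  inductive Val : Type
    | var  : ℕ → Val
    | nat  : ℕ → Val
    | lam  : Comp → Val
    | kont : Comp → Val
  /-- Computations. -/
  inductive Comp : Type
    | app    : Val → Val → Comp
    | ret    : Val → Comp
    | seq    : Comp → Comp → Comp            -- do x ← c₁ in c₂
    | op     : OpName → Val → Comp
    | handle : Comp → Handler → Comp
    | resume : Val → Val → Comp              -- continue v₁ v₂
  /-- Handlers. -/
  inductive Handler : Type
    | retH : Comp → Handler
    | opH  : Handler → OpName → Comp → Handler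
end

def liftR (f : ℕ → ℕ) : ℕ → ℕ
  | 0 => 0
  | n + 1 => f n + 1

mutual
  def Val.rename : Val → (ℕ → ℕ) → Val
    | .var n, f => .var (f n)
    | .nat m, _ => .nat m
    | .lam c, f => .lam (c.rename (liftR f))
    | .kont c, f => .kont (c.rename (liftR f))
  def Comp.rename : Comp → (ℕ → ℕ) → Comp
    | .app v₁ v₂, f => .app (v₁.rename f) (v₂.rename f)
    | .ret v, f => .ret (v.rename f)
    | .seq c₁ c₂, f => .seq (c₁.rename f) (c₂.rename (liftR f))
    | .op o v, f => .op o (v.rename f)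
    | .handle c h, f => .handle (c.rename f) (h.rename f)
    | .resume v₁ v₂, f => .resume (v₁.rename f) (v₂.rename f)
  def Handler.rename : Handler → (ℕ → ℕ) → Handler
    | .retH c, f => .retH (c.rename (liftR f))
    | .opH h o c, f => .opH (h.rename f) o (c.rename (liftR (liftR f)))
end

def liftS (σ : ℕ → Val) : ℕ → Val
  | 0 => .var 0
  | n + 1 => (σ n).rename Nat.succ

mutual
  def Val.subst : Val → (ℕ → Val) → Val
    | .var n, σ => σ n
    | .nat m, _ => .nat m
    | .lam c, σ => .lam (c.subst (liftS σ))
    | .kont c, σ => .kont (c.subst (liftS σ))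
  def Comp.subst : Comp → (ℕ → Val) → Comp
    | .app v₁ v₂, σ => .app (v₁.subst σ) (v₂.subst σ)
    | .ret v, σ => .ret (v.subst σ)
    | .seq c₁ c₂, σ => .seq (c₁.subst σ) (c₂.subst (liftS σ))
    | .op o v, σ => .op o (v.subst σ)
    | .handle c h, σ => .handle (c.subst σ) (h.subst σ)
    | .resume v₁ v₂, σ => .resume (v₁.subst σ) (v₂.subst σ)
  def Handler.subst : Handler → (ℕ → Val) → Handler
    | .retH c, σ => .retH (c.subst (liftS σ))
    | .opH h o c, σ => .opH (h.subst σ) o (c.subst (liftS (liftS σ)))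
end

/-- Substituting a single value for the topmost de Bruijn variable. -/
def Comp.subst1 (c : Comp) (v : Val) : Comp :=
  c.subst fun n => match n with | 0 => v | n + 1 => .var n

/-- Substituting for the two topmost de Bruijn variables
(index 0 is the continuation `k`, index 1 the argument `x`). -/
def Comp.subst2 (c : Comp) (vk vx : Val) : Comp :=
  c.subst fun n => match n with | 0 => vk | 1 => vx | n + 2 => .var n

/-- The operations handled by a handler. -/
def Handler.dom : Handler → Eff
  | .retH _ => ∅
  | .opH h o _ => insert o h.dom

/-- The return clause of a handler. -/
def Handler.retClause : Handler → Comp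
  | .retH c => c
  | .opH h _ _ => h.retClause

/-- The clause of a handler for an operation, if any. -/
def Handler.lookup : Handler → OpName → Option Comp
  | .retH _, _ => none
  | .opH h o c, o' => if o = o' then some c else h.lookup o'

abbrev TCtx := List VTy

mutual
  /-- Typing of values: `Γ ⊢ v : T`. -/
  inductive ValTy : Sig → TCtx → Val → VTy → Prop
    | var {Sg : Sig} {Γ : TCtx} {n : ℕ} {T : VTy} :
        Γ[n]? = some T → ValTy Sg Γ (.var n) T
    | nat {Sg : Sig} {Γ : TCtx} {m : ℕ} : ValTy Sg Γ (.nat m) .nat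
    | lam {Sg : Sig} {Γ : TCtx} {S T : VTy} {Δ : Eff} {c : Comp} :
        CompTy Sg (S :: Γ) c T Δ → ValTy Sg Γ (.lam c) (.fn S Δ T)
    | kont {Sg : Sig} {Γ : TCtx} {S T : VTy} {Δ : Eff} {c : Comp} :
        CompTy Sg (S :: Γ) c T Δ → ValTy Sg Γ (.kont c) (.cont S Δ T)
  /-- Typing of computations: `Γ ⊢ c : T ! Δ`. -/
  inductive CompTy : Sig → TCtx → Comp → VTy → Eff → Prop
    | app {Sg : Sig} {Γ : TCtx} {S T : VTy} {Δ : Eff} {v₁ v₂ : Val} :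
        ValTy Sg Γ v₁ (.fn S Δ T) → ValTy Sg Γ v₂ S → CompTy Sg Γ (.app v₁ v₂) T Δ
    | resume {Sg : Sig} {Γ : TCtx} {S T : VTy} {Δ : Eff} {v₁ v₂ : Val} :
        ValTy Sg Γ v₁ (.cont S Δ T) → ValTy Sg Γ v₂ S → CompTy Sg Γ (.resume v₁ v₂) T Δ
    | ret {Sg : Sig} {Γ : TCtx} {T : VTy} {Δ : Eff} {v : Val} :
        ValTy Sg Γ v T → CompTy Sg Γ (.ret v) T Δ
    | seq {Sg : Sig} {Γ : TCtx} {S T : VTy} {Δ : Eff} {c₁ c₂ : Comp} :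
        CompTy Sg Γ c₁ S Δ → CompTy Sg (S :: Γ) c₂ T Δ → CompTy Sg Γ (.seq c₁ c₂) T Δ
    | op {Sg : Sig} {Γ : TCtx} {Δ : Eff} {o : OpName} {v : Val} :
        ValTy Sg Γ v (Sg.arg o) → o ∈ Δ → CompTy Sg Γ (.op o v) (Sg.res o) Δ
    | handle {Sg : Sig} {Γ : TCtx} {S T : VTy} {Δ₁ Δ₂ : Eff} {c : Comp} {h : Handler} :
        CompTy Sg Γ c S Δ₁ → HandTy Sg Γ h S Δ₁ T Δ₂ →
        (∀ o ∈ Δ₁, o ∉ Δ₂ → o ∈ h.dom) →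
        CompTy Sg Γ (.handle c h) T Δ₂
  /-- Typing of handlers: `Γ ⊢ h : S ! Δ₁ ⇒ T ! Δ₂`. -/
  inductive HandTy : Sig → TCtx → Handler → VTy → Eff → VTy → Eff → Prop
    | retH {Sg : Sig} {Γ : TCtx} {S T : VTy} {Δ₁ Δ₂ : Eff} {c : Comp} :
        CompTy Sg (S :: Γ) c T Δ₂ → HandTy Sg Γ (.retH c) S Δ₁ T Δ₂
    | opH {Sg : Sig} {Γ : TCtx} {S T : VTy} {Δ₁ Δ₂ : Eff} {o : OpName} {h : Handler} {c : Comp} :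
        HandTy Sg Γ h S Δ₁ T Δ₂ →
        CompTy Sg (VTy.cont (Sg.res o) Δ₂ T :: Sg.arg o :: Γ) c T Δ₂ →
        Δ₁ ⊆ Δ₂ ∪ {o} →
        o ∉ h.dom →
        HandTy Sg Γ (.opH h o c) S Δ₁ T Δ₂
end

/-- Evaluation frames. -/
inductive Frame : Type
  | seqF    : Comp → Frame            -- do x ← [-] in c₂
  | handleF : Handler → Frame         -- handle [-] with h

/-- Evaluation contexts, represented as a stack of frames (head innermost). -/
abbrev EvalCtx := List Frame

def plugF : Frame → Comp → Comp
  | .seqF c₂, c => .seq c c₂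
  | .handleF h, c => .handle c h

/-- Plugging a computation into an evaluation context: `E[c]`. -/
def plug : EvalCtx → Comp → Comp
  | [], c => c
  | F :: E, c => plug E (plugF F c)

/-- The operations handled by (handler frames in) an evaluation context. -/
def handled : EvalCtx → Eff
  | [] => ∅
  | .seqF _ :: E => handled E
  | .handleF h :: E => handled E ∪ h.dom

/-- Configurations `⟨c; E⟩`. -/
abbrev Config := Comp × EvalCtx

/-- The small-step operational semantics of λ_op on configurations. -/
inductive Step : Config → Config → Prop
  | app {c : Comp} {v : Val} {E : EvalCtx} :
      Step (.app (.lam c) v, E) (c.subst1 v, E)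
  | seq {c : Comp} {v : Val} {E : EvalCtx} :
      Step (.seq (.ret v) c, E) (c.subst1 v, E)
  | hdl {h : Handler} {v : Val} {E : EvalCtx} :
      Step (.handle (.ret v) h, E) (h.retClause.subst1 v, E)
  | push (F : Frame) (c : Comp) (E : EvalCtx) :
      Step (plugF F c, E) (c, F :: E)
  | pop (F : Frame) (v : Val) (E : EvalCtx) :
      Step (.ret v, F :: E) (plugF F (.ret v), E)
  | op {h : Handler} {o : OpName} {v : Val} {c : Comp} (E₁ E₂ : EvalCtx) :
      h.lookup o = some c →
      o ∉ handled E₂ →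
      Step (.op o v, E₂ ++ .handleF h :: E₁)
           (c.subst2 (.kont (.handle (plug E₂ (.ret (.var 0))) h)) v, E₁)
  | resume {c : Comp} {v : Val} {E : EvalCtx} :
      Step (.resume (.kont c) v, E) (c.subst1 v, E)

/-- Iterated reduction. -/
abbrev Steps : Config → Config → Prop := Relation.ReflTransGen Step

/-- Divergence: an infinite reduction sequence from a configuration. -/
def Diverges (k : Config) : Prop :=
  ∃ f : ℕ → Config, f 0 = k ∧ ∀ n, Step (f n) (f (n + 1))

end EffLang

namespace EffLang

theorem dom_rename : ∀ (h : Handler) (f : ℕ → ℕ), (h.rename f).dom = h.dom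
  | .retH _, _ => rfl
  | .opH h o c, f => by simp [Handler.rename, Handler.dom, dom_rename h]

theorem dom_subst : ∀ (h : Handler) (σ : ℕ → Val), (h.subst σ).dom = h.dom
  | .retH _, _ => rfl
  | .opH h o c, σ => by simp [Handler.subst, Handler.dom, dom_subst h]

theorem cons_cond {Γ Γ' : TCtx} (h : ∀ (n : ℕ) T, Γ[n]? = some T → Γ'[n]? = some T) (S : VTy) :
    ∀ (n : ℕ) (T : VTy), (S::Γ)[n]? = some T → (S::Γ')[n]? = some T := by
  intro n T hh
  cases n with
  | zero => simpa using hh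
  | succ n => simpa using h n T (by simpa using hh)

theorem liftR_cond {Γ Γ' : TCtx} {f : ℕ → ℕ}
    (h : ∀ (n : ℕ) T, Γ[n]? = some T → Γ'[f n]? = some T) (S : VTy) :
    ∀ (n : ℕ) (T : VTy), (S::Γ)[n]? = some T → (S::Γ')[liftR f n]? = some T := by
  intro n T hh
  cases n with
  | zero => simpa [liftR] using hh
  | succ n => simpa [liftR] using h n T (by simpa using hh)

mutual
theorem rename_val {Sg : Sig} : ∀ (v : Val) {Γ Γ' : TCtx} {T} (f : ℕ → ℕ),
    ValTy Sg Γ v T → (∀ (n : ℕ) T', Γ[n]? = some T' → Γ'[f n]? = some T') →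
    ValTy Sg Γ' (v.rename f) T
  | .var n, _, _, _, f, h, hf => by
      cases h with | var h => exact .var (hf _ _ h)
  | .nat m, _, _, _, f, h, hf => by cases h; exact .nat
  | .lam c, _, _, _, f, h, hf => by
      cases h with | lam hc => exact .lam (rename_comp c _ hc (liftR_cond hf _))
  | .kont c, _, _, _, f, h, hf => by
      cases h with | kont hc => exact .kont (rename_comp c _ hc (liftR_cond hf _))

theorem rename_comp {Sg : Sig} : ∀ (c : Comp) {Γ Γ' : TCtx} {T Δ} (f : ℕ → ℕ),
    CompTy Sg Γ c T Δ → (∀ (n : ℕ) T', Γ[n]? = some T' → Γ'[f n]? = some T') →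
    CompTy Sg Γ' (c.rename f) T Δ
  | .app v₁ v₂, _, _, _, _, f, h, hf => by
      cases h with | app h1 h2 => exact .app (rename_val v₁ f h1 hf) (rename_val v₂ f h2 hf)
  | .resume v₁ v₂, _, _, _, _, f, h, hf => by
      cases h with | resume h1 h2 => exact .resume (rename_val v₁ f h1 hf) (rename_val v₂ f h2 hf)
  | .ret v, _, _, _, _, f, h, hf => by
      cases h with | ret h1 => exact .ret (rename_val v f h1 hf)
  | .seq c₁ c₂, _, _, _, _, f, h, hf => by
      cases h with | seq h1 h2 =>
        exact .seq (rename_comp c₁ f h1 hf) (rename_comp c₂ _ h2 (liftR_cond hf _))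
  | .op o v, _, _, _, _, f, h, hf => by
      cases h with | op h1 ho => exact .op (rename_val v f h1 hf) ho
  | .handle c hd, _, _, _, _, f, h, hf => by
      cases h with | handle h1 h2 hcov =>
        exact .handle (rename_comp c f h1 hf) (rename_hand hd f h2 hf)
          (by rw [dom_rename]; exact hcov)

theorem rename_hand {Sg : Sig} : ∀ (h : Handler) {Γ Γ' : TCtx} {S Δ₁ T Δ₂} (f : ℕ → ℕ),
    HandTy Sg Γ h S Δ₁ T Δ₂ → (∀ (n : ℕ) T', Γ[n]? = some T' → Γ'[f n]? = some T') →
    HandTy Sg Γ' (h.rename f) S Δ₁ T Δ₂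
  | .retH c, _, _, _, _, _, _, f, h, hf => by
      cases h with | retH hc => exact .retH (rename_comp c _ hc (liftR_cond hf _))
  | .opH hd o c, _, _, _, _, _, _, f, h, hf => by
      cases h with | opH hh hc hsub hdom =>
        exact .opH (rename_hand hd f hh hf)
          (rename_comp c _ hc (liftR_cond (liftR_cond hf _) _)) hsub
          (by rw [dom_rename]; exact hdom)
end

mutual
theorem wk_val {Sg : Sig} : ∀ (v : Val) {Γ Γ' : TCtx} {T},
    ValTy Sg Γ v T → (∀ (n : ℕ) T', Γ[n]? = some T' → Γ'[n]? = some T') → ValTy Sg Γ' v T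
  | .var n, _, _, _, h, hf => by cases h with | var h => exact .var (hf _ _ h)
  | .nat m, _, _, _, h, hf => by cases h; exact .nat
  | .lam c, _, _, _, h, hf => by
      cases h with | lam hc => exact .lam (wk_comp c hc (cons_cond hf _))
  | .kont c, _, _, _, h, hf => by
      cases h with | kont hc => exact .kont (wk_comp c hc (cons_cond hf _))

theorem wk_comp {Sg : Sig} : ∀ (c : Comp) {Γ Γ' : TCtx} {T Δ},
    CompTy Sg Γ c T Δ → (∀ (n : ℕ) T', Γ[n]? = some T' → Γ'[n]? = some T') → CompTy Sg Γ' c T Δ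
  | .app v₁ v₂, _, _, _, _, h, hf => by
      cases h with | app h1 h2 => exact .app (wk_val v₁ h1 hf) (wk_val v₂ h2 hf)
  | .resume v₁ v₂, _, _, _, _, h, hf => by
      cases h with | resume h1 h2 => exact .resume (wk_val v₁ h1 hf) (wk_val v₂ h2 hf)
  | .ret v, _, _, _, _, h, hf => by cases h with | ret h1 => exact .ret (wk_val v h1 hf)
  | .seq c₁ c₂, _, _, _, _, h, hf => by
      cases h with | seq h1 h2 => exact .seq (wk_comp c₁ h1 hf) (wk_comp c₂ h2 (cons_cond hf _))
  | .op o v, _, _, _, _, h, hf => by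
      cases h with | op h1 ho => exact .op (wk_val v h1 hf) ho
  | .handle c hd, _, _, _, _, h, hf => by
      cases h with | handle h1 h2 hcov =>
        exact .handle (wk_comp c h1 hf) (wk_hand hd h2 hf) hcov

theorem wk_hand {Sg : Sig} : ∀ (h : Handler) {Γ Γ' : TCtx} {S Δ₁ T Δ₂},
    HandTy Sg Γ h S Δ₁ T Δ₂ → (∀ (n : ℕ) T', Γ[n]? = some T' → Γ'[n]? = some T') →
    HandTy Sg Γ' h S Δ₁ T Δ₂
  | .retH c, _, _, _, _, _, _, h, hf => by
      cases h with | retH hc => exact .retH (wk_comp c hc (cons_cond hf _))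
  | .opH hd o c, _, _, _, _, _, _, h, hf => by
      cases h with | opH hh hc hsub hdom =>
        exact .opH (wk_hand hd hh hf) (wk_comp c hc (cons_cond (cons_cond hf _) _)) hsub hdom
end

theorem liftS_cond {Sg : Sig} {Γ Γ' : TCtx} {σ : ℕ → Val}
    (h : ∀ (n : ℕ) T, Γ[n]? = some T → ValTy Sg Γ' (σ n) T) (S : VTy) :
    ∀ (n : ℕ) (T : VTy), (S::Γ)[n]? = some T → ValTy Sg (S::Γ') (liftS σ n) T := by
  intro n T hh
  cases n with
  | zero =>
      have hS : S = T := by simpa using hh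
      exact hS ▸ ValTy.var (by simp [liftS])
  | succ n =>
      have := h n T (by simpa using hh)
      exact rename_val _ Nat.succ this (fun m T' hm => by simpa using hm)

mutual
theorem subst_val {Sg : Sig} : ∀ (v : Val) {Γ Γ' : TCtx} {T} (σ : ℕ → Val),
    ValTy Sg Γ v T → (∀ (n : ℕ) T', Γ[n]? = some T' → ValTy Sg Γ' (σ n) T') →
    ValTy Sg Γ' (v.subst σ) T
  | .var n, _, _, _, σ, h, hf => by cases h with | var h => exact hf _ _ h
  | .nat m, _, _, _, σ, h, hf => by cases h; exact .nat
  | .lam c, _, _, _, σ, h, hf => by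
      cases h with | lam hc => exact .lam (subst_comp c _ hc (liftS_cond hf _))
  | .kont c, _, _, _, σ, h, hf => by
      cases h with | kont hc => exact .kont (subst_comp c _ hc (liftS_cond hf _))

theorem subst_comp {Sg : Sig} : ∀ (c : Comp) {Γ Γ' : TCtx} {T Δ} (σ : ℕ → Val),
    CompTy Sg Γ c T Δ → (∀ (n : ℕ) T', Γ[n]? = some T' → ValTy Sg Γ' (σ n) T') →
    CompTy Sg Γ' (c.subst σ) T Δ
  | .app v₁ v₂, _, _, _, _, σ, h, hf => by
      cases h with | app h1 h2 => exact .app (subst_val v₁ σ h1 hf) (subst_val v₂ σ h2 hf)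
  | .resume v₁ v₂, _, _, _, _, σ, h, hf => by
      cases h with | resume h1 h2 => exact .resume (subst_val v₁ σ h1 hf) (subst_val v₂ σ h2 hf)
  | .ret v, _, _, _, _, σ, h, hf => by cases h with | ret h1 => exact .ret (subst_val v σ h1 hf)
  | .seq c₁ c₂, _, _, _, _, σ, h, hf => by
      cases h with | seq h1 h2 =>
        exact .seq (subst_comp c₁ σ h1 hf) (subst_comp c₂ _ h2 (liftS_cond hf _))
  | .op o v, _, _, _, _, σ, h, hf => by
      cases h with | op h1 ho => exact .op (subst_val v σ h1 hf) ho
  | .handle c hd, _, _, _, _, σ, h, hf => by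
      cases h with | handle h1 h2 hcov =>
        exact .handle (subst_comp c σ h1 hf) (subst_hand hd σ h2 hf)
          (by rw [dom_subst]; exact hcov)

theorem subst_hand {Sg : Sig} : ∀ (h : Handler) {Γ Γ' : TCtx} {S Δ₁ T Δ₂} (σ : ℕ → Val),
    HandTy Sg Γ h S Δ₁ T Δ₂ → (∀ (n : ℕ) T', Γ[n]? = some T' → ValTy Sg Γ' (σ n) T') →
    HandTy Sg Γ' (h.subst σ) S Δ₁ T Δ₂
  | .retH c, _, _, _, _, _, _, σ, h, hf => by
      cases h with | retH hc => exact .retH (subst_comp c _ hc (liftS_cond hf _))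
  | .opH hd o c, _, _, _, _, _, _, σ, h, hf => by
      cases h with | opH hh hc hsub hdom =>
        exact .opH (subst_hand hd σ hh hf)
          (subst_comp c _ hc (liftS_cond (liftS_cond hf _) _)) hsub
          (by rw [dom_subst]; exact hdom)
end

theorem subst1_ty {Sg : Sig} {Γ : TCtx} {S T : VTy} {Δ : Eff} {c : Comp} {v : Val}
    (hc : CompTy Sg (S :: Γ) c T Δ) (hv : ValTy Sg Γ v S) :
    CompTy Sg Γ (c.subst1 v) T Δ := by
  refine subst_comp c _ hc ?_
  intro n T' hn
  cases n with
  | zero => have h : S = T' := by simpa using hn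
            exact h ▸ hv
  | succ n => exact .var (by simpa using hn)

theorem subst2_ty {Sg : Sig} {Γ : TCtx} {S₀ S₁ T : VTy} {Δ : Eff} {c : Comp} {vk vx : Val}
    (hc : CompTy Sg (S₀ :: S₁ :: Γ) c T Δ) (hk : ValTy Sg Γ vk S₀) (hx : ValTy Sg Γ vx S₁) :
    CompTy Sg Γ (c.subst2 vk vx) T Δ := by
  refine subst_comp c _ hc ?_
  intro n T' hn
  cases n with
  | zero => have h : S₀ = T' := by simpa using hn
            exact h ▸ hk
  | succ n =>
      cases n with
      | zero => have h : S₁ = T' := by simpa using hn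
                exact h ▸ hx
      | succ n => exact .var (by simpa using hn)

theorem retClause_ty {Sg : Sig} : ∀ (h : Handler) {Γ S Δ₁ T Δ₂},
    HandTy Sg Γ h S Δ₁ T Δ₂ → CompTy Sg (S :: Γ) h.retClause T Δ₂
  | .retH c, _, _, _, _, _, hh => by cases hh with | retH hc => exact hc
  | .opH hd o c, _, _, _, _, _, hh => by
      cases hh with | opH hh _ _ _ => exact retClause_ty hd hh

theorem lookup_ty {Sg : Sig} : ∀ (h : Handler) {Γ S Δ₁ T Δ₂ o c},
    HandTy Sg Γ h S Δ₁ T Δ₂ → h.lookup o = some c →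
    CompTy Sg (VTy.cont (Sg.res o) Δ₂ T :: Sg.arg o :: Γ) c T Δ₂
  | .retH c, _, _, _, _, _, _, _, hh, hl => by simp [Handler.lookup] at hl
  | .opH hd o' c, _, _, _, _, _, o, c', hh, hl => by
      cases hh with | opH hh hc hsub hdom =>
        by_cases he : o' = o
        · subst he
          simp [Handler.lookup] at hl
          exact hl ▸ hc
        · simp [Handler.lookup, he] at hl
          exact lookup_ty hd hh hl

/-- Typed evaluation contexts. -/
inductive CtxTy (Sg : Sig) (Γ : TCtx) : EvalCtx → VTy → Eff → VTy → Eff → Prop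
  | nil {T Δ} : CtxTy Sg Γ [] T Δ T Δ
  | seqF {S S' Δ₁ T Δ c₂ E} : CompTy Sg (S :: Γ) c₂ S' Δ₁ → CtxTy Sg Γ E S' Δ₁ T Δ →
      CtxTy Sg Γ (.seqF c₂ :: E) S Δ₁ T Δ
  | handleF {S Δ₁ S' Δ₂ T Δ h E} : HandTy Sg Γ h S Δ₁ S' Δ₂ →
      (∀ o ∈ Δ₁, o ∉ Δ₂ → o ∈ h.dom) → CtxTy Sg Γ E S' Δ₂ T Δ →
      CtxTy Sg Γ (.handleF h :: E) S Δ₁ T Δ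

theorem plug_ty {Sg : Sig} {Γ : TCtx} {E S Δ₁ T Δ} (hE : CtxTy Sg Γ E S Δ₁ T Δ) :
    ∀ {c}, CompTy Sg Γ c S Δ₁ → CompTy Sg Γ (plug E c) T Δ := by
  induction hE with
  | nil => exact fun h => h
  | seqF h1 h2 ih => intro c hc; exact ih (.seq hc h1)
  | handleF h1 hcov h2 ih => intro c hc; exact ih (.handle hc h1 hcov)

theorem plug_inv {Sg : Sig} {Γ : TCtx} {T Δ} :
    ∀ (E : EvalCtx) {c}, CompTy Sg Γ (plug E c) T Δ →
    ∃ S Δ₁, CtxTy Sg Γ E S Δ₁ T Δ ∧ CompTy Sg Γ c S Δ₁ := by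
  intro E
  induction E with
  | nil => exact fun h => ⟨T, Δ, .nil, h⟩
  | cons F E ih =>
      intro c h
      obtain ⟨S, Δ₁, hE, hc⟩ := ih h
      cases F with
      | seqF c₂ =>
          cases hc with | seq h1 h2 => exact ⟨_, _, .seqF h2 hE, h1⟩
      | handleF hd =>
          cases hc with | handle h1 h2 hcov => exact ⟨_, _, .handleF h2 hcov hE, h1⟩

theorem ctx_append_inv {Sg : Sig} {Γ : TCtx} :
    ∀ (E₂ : EvalCtx) {E₁ S Δ₁ T Δ}, CtxTy Sg Γ (E₂ ++ E₁) S Δ₁ T Δ →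
    ∃ M Δm, CtxTy Sg Γ E₂ S Δ₁ M Δm ∧ CtxTy Sg Γ E₁ M Δm T Δ := by
  intro E₂
  induction E₂ with
  | nil => exact fun h => ⟨_, _, .nil, h⟩
  | cons F E ih =>
      intro E₁ S Δ₁ T Δ h
      cases h with
      | seqF h1 h2 =>
          obtain ⟨M, Δm, hE, hE'⟩ := ih h2
          exact ⟨M, Δm, .seqF h1 hE, hE'⟩
      | handleF h1 hcov h2 =>
          obtain ⟨M, Δm, hE, hE'⟩ := ih h2
          exact ⟨M, Δm, .handleF h1 hcov hE, hE'⟩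

theorem ctx_wk {Sg : Sig} {Γ Γ' : TCtx} {E S Δ₁ T Δ}
    (hE : CtxTy Sg Γ E S Δ₁ T Δ) (hf : ∀ (n : ℕ) T', Γ[n]? = some T' → Γ'[n]? = some T') :
    CtxTy Sg Γ' E S Δ₁ T Δ := by
  induction hE with
  | nil => exact .nil
  | seqF h1 h2 ih => exact .seqF (wk_comp _ h1 (cons_cond hf _)) ih
  | handleF h1 hcov h2 ih => exact .handleF (wk_hand _ h1 hf) hcov ih

/-- **Preservation for λ_op** (Theorem B.2): if `E[c]` is closed and well-typed
with computation type `T ! Δ` and `⟨c; E⟩ → ⟨c'; E'⟩`, then `E'[c']` is closed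
and well-typed with computation type `T ! Δ`. -/
theorem preservation (Sg : Sig) (c c' : Comp) (E E' : EvalCtx) (T : VTy) (Δ : Eff)
    (hty : CompTy Sg [] (plug E c) T Δ)
    (hstep : Step (c, E) (c', E')) :
    CompTy Sg [] (plug E' c') T Δ := by
  cases hstep with
  | app =>
      obtain ⟨S, Δ₁, hE, hc⟩ := plug_inv E hty
      cases hc with | app h1 h2 =>
        cases h1 with | lam hbody => exact plug_ty hE (subst1_ty hbody h2)
  | seq =>
      obtain ⟨S, Δ₁, hE, hc⟩ := plug_inv E hty
      cases hc with | seq h1 h2 =>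
        cases h1 with | ret hv => exact plug_ty hE (subst1_ty h2 hv)
  | hdl =>
      obtain ⟨S, Δ₁, hE, hc⟩ := plug_inv E hty
      cases hc with | handle h1 h2 hcov =>
        cases h1 with | ret hv => exact plug_ty hE (subst1_ty (retClause_ty _ h2) hv)
  | push F c₀ E₀ => exact hty
  | pop F v E₀ => exact hty
  | op Eout Ein hl hnh =>
      rename_i hd o v cl
      obtain ⟨S, Δ₁, hE, hc⟩ := plug_inv _ hty
      cases hc with | op hv ho =>
        obtain ⟨M, Δm, hE₂, hE₁'⟩ := ctx_append_inv Ein hE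
        cases hE₁' with | handleF hh hcov hE₁ =>
          have hnil : ∀ (Γ' : TCtx) (n : ℕ) (T' : VTy),
              ([] : TCtx)[n]? = some T' → Γ'[n]? = some T' := by
            intro Γ' n T' hn
            rw [List.getElem?_nil] at hn
            cases hn
          have hhole : CompTy Sg [Sg.res o] (.ret (.var 0)) (Sg.res o) Δ₁ :=
            .ret (.var (by simp))
          have hplug := plug_ty (ctx_wk hE₂ (hnil _)) hhole
          have hK := CompTy.handle hplug (wk_hand _ hh (hnil _)) hcov
          exact plug_ty hE₁ (subst2_ty (lookup_ty _ hh hl) (.kont hK) hv)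
  | resume =>
      obtain ⟨S, Δ₁, hE, hc⟩ := plug_inv E hty
      cases hc with | resume h1 h2 =>
        cases h1 with | kont hbody => exact plug_ty hE (subst1_ty hbody h2)

end EffLang
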